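/- arXiv:1812.10324 — 2 statements merged into one kernel-verified Lean document; each statement's English description precedes it below -/
import Mathlib

section
/- For an odd prime p, define Ψ(x) as the truncated series ∑_{k=0}^{(p-1)/2} (5/4)_k (1/2)_k ((1-ix)/2)_k ((1+ix)/2)_k ((1-x)/2)_k ((1+x)/2)_k / ((1/4)_k (1+ix/2)_k (1-ix/2)_k (1+x/2)_k (1-x/2)_k) · (-1)^k / k!. Then Ψ(x), viewed as a rational function of x, is a power series in x^4 with coefficients in ℤ_p (i.e., Ψ(x) = ∑_{n≥0} a_n x^{4n} with a_n ∈ ℤ_p). -/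
open Finset

/-- Pochhammer symbol `(x)_k = x(x+1)⋯(x+k-1)`, `(x)_0 = 1`. -/
noncomputable def poch {K : Type*} [Field K] (x : K) (k : ℕ) : K :=
  ∏ j ∈ Finset.range k, (x + j)

/-- The truncated series
`Ψ(x) = ∑_{k=0}^{(p-1)/2} (5/4)_k (1/2)_k ((1-ix)/2)_k ((1+ix)/2)_k ((1-x)/2)_k ((1+x)/2)_k
  / ((1/4)_k (1+ix/2)_k (1-ix/2)_k (1+x/2)_k (1-x/2)_k) · (-1)^k/k!`,
in a field `K` containing a square root `i` of `-1`. -/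
noncomputable def psiFun (p : ℕ) {K : Type*} [Field K] (i : K) (x : K) : K :=
  ∑ k ∈ Finset.range ((p - 1) / 2 + 1),
    poch ((5 : K) / 4) k * poch (1 / 2) k * poch ((1 - i * x) / 2) k *
        poch ((1 + i * x) / 2) k * poch ((1 - x) / 2) k * poch ((1 + x) / 2) k /
      (poch (1 / 4) k * poch (1 + i * x / 2) k * poch (1 - i * x / 2) k *
        poch (1 + x / 2) k * poch (1 - x / 2) k) * (-1) ^ k / (k.factorial : K)

set_option linter.unusedSectionVars false

section FieldLemmas
variable {K : Type*} [Field K]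

lemma poch_succ (x : K) (k : ℕ) : poch x (k + 1) = poch x k * (x + k) :=
  Finset.prod_range_succ _ _

lemma poch_shift (x : K) (k : ℕ) : x * poch (x + 1) k = poch x k * (x + k) := by
  induction k with
  | zero => simp [poch]
  | succ n ih =>
    rw [poch_succ, poch_succ, ← mul_assoc, ih]
    push_cast
    ring

lemma poch_quarter_ne_zero [CharZero K] (k : ℕ) : poch ((1 : K) / 4) k ≠ 0 := by
  unfold poch
  apply Finset.prod_ne_zero_iff.mpr
  intro j _
  intro h
  have h4 : ((4 * j + 1 : ℕ) : K) = 0 := by push_cast; linear_combination 4 * h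
  exact Nat.cast_ne_zero.mpr (by omega) h4

lemma poch_five_quarter (k : ℕ) [CharZero K] :
    poch ((5 : K) / 4) k = poch ((1 : K) / 4) k * (4 * k + 1) := by
  have h := poch_shift ((1 : K) / 4) k
  have h1 : (1 : K) / 4 + 1 = 5 / 4 := by norm_num
  rw [h1] at h
  linear_combination 4 * h

lemma poch_half_eq [CharZero K] (k : ℕ) :
    poch ((1 : K) / 2) k * 4 ^ k * (k.factorial : K) = ((2 * k).factorial : K) := by
  induction k with
  | zero => simp [poch]
  | succ n ih =>
    rw [poch_succ]
    have h2 : 2 * (n + 1) = (2 * n + 1) + 1 := by ring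
    rw [h2, Nat.factorial_succ, Nat.factorial_succ, Nat.factorial_succ]
    have h2 : (2:K) * 2⁻¹ = 1 := mul_inv_cancel₀ two_ne_zero
    push_cast
    push_cast at ih
    linear_combination (4 * ((n:K) + 1) * (2⁻¹ + (n:K))) * ih +
      ((2 * (n:K) + 2) * ((2*n).factorial : K)) * h2

lemma quad_num [CharZero K] (i x : K) (hi : i ^ 2 = -1) (j : ℕ) :
    ((1 - i * x) / 2 + j) * ((1 + i * x) / 2 + j) * ((1 - x) / 2 + j) * ((1 + x) / 2 + j) =
      (((2 * j + 1 : ℕ) : K) ^ 4 - x ^ 4) / 16 := by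
  push_cast
  field_simp
  linear_combination (16*(x^4 - x^2*(1+2*(j:K))^2)) * hi

lemma quad_den [CharZero K] (i x : K) (hi : i ^ 2 = -1) (j : ℕ) :
    (1 + i * x / 2 + j) * (1 - i * x / 2 + j) * (1 + x / 2 + j) * (1 - x / 2 + j) =
      (((2 * j + 2 : ℕ) : K) ^ 4 - x ^ 4) / 16 := by
  push_cast
  field_simp
  linear_combination (16*(x^4 - x^2*(2+2*(j:K))^2)) * hi

end FieldLemmas

lemma psi_eq (p : ℕ) {K : Type*} [Field K] [CharZero K] (i x : K) (hi : i ^ 2 = -1)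
    (hden : ∀ k ∈ Finset.range ((p - 1) / 2 + 1),
      (∏ j ∈ Finset.range k, (((2 * j + 2 : ℕ) : K) ^ 4 - x ^ 4)) ≠ 0) :
    psiFun p i x = ∑ k ∈ Finset.range ((p - 1) / 2 + 1),
      ((4 * k + 1 : ℕ) : K) * (-1) ^ k * poch ((1 : K) / 2) k / (k.factorial : K) *
        ((∏ j ∈ Finset.range k, (((2 * j + 1 : ℕ) : K) ^ 4 - x ^ 4)) /
         (∏ j ∈ Finset.range k, (((2 * j + 2 : ℕ) : K) ^ 4 - x ^ 4))) := by
  unfold psiFun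
  refine Finset.sum_congr rfl fun k hk => ?_
  have hA : poch ((1 - i * x) / 2) k * poch ((1 + i * x) / 2) k * poch ((1 - x) / 2) k *
      poch ((1 + x) / 2) k
      = (∏ j ∈ Finset.range k, (((2 * j + 1 : ℕ) : K) ^ 4 - x ^ 4)) / 16 ^ k := by
    unfold poch
    rw [← Finset.prod_mul_distrib, ← Finset.prod_mul_distrib, ← Finset.prod_mul_distrib,
      Finset.prod_congr rfl (fun j _ => quad_num i x hi j), Finset.prod_div_distrib,
      Finset.prod_const, Finset.card_range]
  have hB : poch (1 + i * x / 2) k * poch (1 - i * x / 2) k * poch (1 + x / 2) k *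
      poch (1 - x / 2) k
      = (∏ j ∈ Finset.range k, (((2 * j + 2 : ℕ) : K) ^ 4 - x ^ 4)) / 16 ^ k := by
    unfold poch
    rw [← Finset.prod_mul_distrib, ← Finset.prod_mul_distrib, ← Finset.prod_mul_distrib,
      Finset.prod_congr rfl (fun j _ => quad_den i x hi j), Finset.prod_div_distrib,
      Finset.prod_const, Finset.card_range]
  have hNum : poch ((5 : K) / 4) k * poch (1 / 2) k * poch ((1 - i * x) / 2) k *
      poch ((1 + i * x) / 2) k * poch ((1 - x) / 2) k * poch ((1 + x) / 2) k
      = poch ((1 : K) / 4) k * ((4 * (k : K) + 1) * poch ((1 : K) / 2) k *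
        ((∏ j ∈ Finset.range k, (((2 * j + 1 : ℕ) : K) ^ 4 - x ^ 4)) / 16 ^ k)) := by
    calc poch ((5 : K) / 4) k * poch (1 / 2) k * poch ((1 - i * x) / 2) k *
        poch ((1 + i * x) / 2) k * poch ((1 - x) / 2) k * poch ((1 + x) / 2) k
        = poch ((5 : K) / 4) k * poch ((1 : K) / 2) k *
          (poch ((1 - i * x) / 2) k * poch ((1 + i * x) / 2) k * poch ((1 - x) / 2) k *
            poch ((1 + x) / 2) k) := by ring
      _ = _ := by rw [hA, poch_five_quarter]; ring
  have hDen : poch (1 / 4) k * poch (1 + i * x / 2) k * poch (1 - i * x / 2) k *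
      poch (1 + x / 2) k * poch (1 - x / 2) k
      = poch ((1 : K) / 4) k *
        ((∏ j ∈ Finset.range k, (((2 * j + 2 : ℕ) : K) ^ 4 - x ^ 4)) / 16 ^ k) := by
    calc poch (1 / 4) k * poch (1 + i * x / 2) k * poch (1 - i * x / 2) k *
        poch (1 + x / 2) k * poch (1 - x / 2) k
        = poch ((1 : K) / 4) k * (poch (1 + i * x / 2) k * poch (1 - i * x / 2) k *
            poch (1 + x / 2) k * poch (1 - x / 2) k) := by ring
      _ = _ := by rw [hB]
  rw [hNum, hDen, mul_div_mul_left _ _ (poch_quarter_ne_zero k)]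
  have h14 : poch ((1 : K) / 4) k ≠ 0 := poch_quarter_ne_zero k
  have hD : (∏ j ∈ Finset.range k, (((2 * j + 2 : ℕ) : K) ^ 4 - x ^ 4)) ≠ 0 := hden k hk
  have h16 : (16 : K) ^ k ≠ 0 := pow_ne_zero _ (by norm_num)
  have hfact : (k.factorial : K) ≠ 0 := Nat.cast_ne_zero.mpr k.factorial_ne_zero
  push_cast
  field_simp

section PadicFacts
variable {p : ℕ} [Fact p.Prime]

lemma norm_nat_cast_eq_one {n : ℕ} (h0 : 0 < n) (hn : n < p) : ‖(n : ℚ_[p])‖ = 1 := by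
  refine le_antisymm (by exact_mod_cast Padic.norm_int_le_one (n : ℤ)) ?_
  by_contra h
  push_neg at h
  have : ‖((n : ℤ) : ℚ_[p])‖ < 1 := by push_cast; linarith
  rw [Padic.norm_intCast_lt_one_iff] at this
  rw [Int.natCast_dvd_natCast] at this
  exact absurd (Nat.le_of_dvd h0 this) (by omega)

lemma norm_four_eq_one (hp : Odd p) : ‖(4 : ℚ_[p])‖ = 1 := by
  have h2 : (2:ℕ) < p := by
    have hprime : p.Prime := Fact.out
    rcases hp with ⟨t, ht⟩
    have := hprime.two_le
    omega
  have h22 := norm_nat_cast_eq_one (p := p) (n := 2) (by norm_num) h2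
  have h2' : ‖(2 : ℚ_[p])‖ = 1 := by exact_mod_cast h22
  have h4 : (4 : ℚ_[p]) = (2:ℚ_[p]) * 2 := by norm_num
  rw [h4, norm_mul, h2', one_mul]
end PadicFacts

section CoefBound
variable {p : ℕ} [Fact p.Prime] (hp : Odd p)

lemma cQ_norm_le (k : ℕ) (hp : Odd p) :
    ‖((4 * k + 1 : ℕ) : ℚ_[p]) * (-1) ^ k * poch ((1 : ℚ_[p]) / 2) k / (k.factorial : ℚ_[p])‖ ≤ 1 := by
  have hfact : (k.factorial : ℚ_[p]) ≠ 0 := Nat.cast_ne_zero.mpr k.factorial_ne_zero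
  have h4 : ((4 : ℚ_[p]) ^ k) ≠ 0 := pow_ne_zero _ (by norm_num)
  have hval : ((4 * k + 1 : ℕ) : ℚ_[p]) * (-1) ^ k * poch ((1 : ℚ_[p]) / 2) k / (k.factorial : ℚ_[p])
      = ((((-1) ^ k * (4 * k + 1) * ((2 * k).choose k) : ℤ) : ℚ_[p])) / 4 ^ k := by
    have hph := poch_half_eq (K := ℚ_[p]) k
    have hch : (2 * k).choose k * k.factorial * k.factorial = (2 * k).factorial := by
      have h := Nat.choose_mul_factorial_mul_factorial (show k ≤ 2 * k by omega)
      have h2 : 2 * k - k = k := by omega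
      rw [h2] at h
      exact h
    have hph2 : poch ((1 : ℚ_[p]) / 2) k * 4 ^ k = ((2 * k).choose k : ℚ_[p]) * k.factorial := by
      have hc : ((2 * k).choose k : ℚ_[p]) * k.factorial * k.factorial = ((2 * k).factorial : ℚ_[p]) := by
        exact_mod_cast congrArg (Nat.cast : ℕ → ℚ_[p]) hch
      apply mul_right_cancel₀ hfact
      rw [hc.symm] at hph
      exact hph
    rw [div_eq_div_iff hfact h4]
    push_cast
    linear_combination ((4 * (k:ℚ_[p]) + 1) * (-1) ^ k) * hph2
  rw [hval, norm_div, norm_pow, norm_four_eq_one hp, one_pow, div_one]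
  exact Padic.norm_int_le_one _
end CoefBound

section Ev
variable {p : ℕ} [Fact p.Prime]

/-- Evaluation of a `ℤ_[p]` power series at `y : ℚ_[p]`. -/
noncomputable def ev (y : ℚ_[p]) (F : PowerSeries ℤ_[p]) : ℚ_[p] :=
  ∑' n, ((PowerSeries.coeff (R := ℤ_[p]) n F : ℚ_[p]) * y ^ n)

variable {y : ℚ_[p]}

lemma ev_summable_norm (hy : ‖y‖ < 1) (F : PowerSeries ℤ_[p]) :
    Summable fun n => ‖(PowerSeries.coeff (R := ℤ_[p]) n F : ℚ_[p]) * y ^ n‖ := by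
  refine Summable.of_nonneg_of_le (fun n => norm_nonneg _) (fun n => ?_)
    (summable_geometric_of_lt_one (norm_nonneg y) hy)
  rw [norm_mul, norm_pow]
  exact mul_le_of_le_one_left (pow_nonneg (norm_nonneg y) n)
    ((PadicInt.norm_def).symm.trans_le (PadicInt.norm_le_one _))

lemma ev_summable (hy : ‖y‖ < 1) (F : PowerSeries ℤ_[p]) :
    Summable fun n => ((PowerSeries.coeff (R := ℤ_[p]) n F : ℚ_[p]) * y ^ n) :=
  (ev_summable_norm hy F).of_norm

lemma ev_hasSum (hy : ‖y‖ < 1) (F : PowerSeries ℤ_[p]) :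
    HasSum (fun n => ((PowerSeries.coeff (R := ℤ_[p]) n F : ℚ_[p]) * y ^ n)) (ev y F) :=
  (ev_summable hy F).hasSum

lemma ev_zero : ev y (0 : PowerSeries ℤ_[p]) = 0 := by simp [ev]

lemma ev_one : ev y (1 : PowerSeries ℤ_[p]) = 1 := by
  unfold ev
  rw [tsum_eq_single 0 (fun n hn => by simp [PowerSeries.coeff_one, hn])]
  simp

lemma ev_C (r : ℤ_[p]) : ev y ((PowerSeries.C) r) = (r : ℚ_[p]) := by
  unfold ev
  rw [tsum_eq_single 0 (fun n hn => by simp [PowerSeries.coeff_C, hn])]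
  simp

lemma ev_X : ev y (PowerSeries.X : PowerSeries ℤ_[p]) = y := by
  unfold ev
  rw [tsum_eq_single 1 (fun n hn => by simp [PowerSeries.coeff_X, hn])]
  simp

lemma ev_add (hy : ‖y‖ < 1) (F G : PowerSeries ℤ_[p]) : ev y (F + G) = ev y F + ev y G := by
  unfold ev
  rw [← Summable.tsum_add (ev_summable hy F) (ev_summable hy G)]
  congr 1
  funext n
  push_cast [map_add]
  ring

lemma ev_mul (hy : ‖y‖ < 1) (F G : PowerSeries ℤ_[p]) : ev y (F * G) = ev y F * ev y G := by
  unfold ev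
  rw [tsum_mul_tsum_eq_tsum_sum_antidiagonal_of_summable_norm (ev_summable_norm hy F)
    (ev_summable_norm hy G)]
  congr 1
  funext n
  rw [PowerSeries.coeff_mul, show ((((∑ q ∈ Finset.HasAntidiagonal.antidiagonal n, (PowerSeries.coeff (R := ℤ_[p]) q.1) F * (PowerSeries.coeff (R := ℤ_[p]) q.2) G) : ℤ_[p])) : ℚ_[p]) = ∑ q ∈ Finset.HasAntidiagonal.antidiagonal n, (((PowerSeries.coeff (R := ℤ_[p]) q.1) F : ℚ_[p]) * ((PowerSeries.coeff (R := ℤ_[p]) q.2) G : ℚ_[p])) from map_sum (PadicInt.Coe.ringHom) _ _]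
  rw [Finset.sum_mul]
  refine Finset.sum_congr rfl fun q hq => ?_
  have : q.1 + q.2 = n := Finset.HasAntidiagonal.mem_antidiagonal.mp hq
  rw [← this, pow_add]
  ring

lemma ev_sum {α : Type*} (hy : ‖y‖ < 1) (s : Finset α) (f : α → PowerSeries ℤ_[p]) :
    ev y (∑ k ∈ s, f k) = ∑ k ∈ s, ev y (f k) := by
  classical
  induction s using Finset.induction_on with
  | empty => simp [ev_zero]
  | insert a s hx ih => rw [Finset.sum_insert hx, Finset.sum_insert hx, ev_add hy, ih]

lemma ev_prod {α : Type*} (hy : ‖y‖ < 1) (s : Finset α) (f : α → PowerSeries ℤ_[p]) :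
    ev y (∏ k ∈ s, f k) = ∏ k ∈ s, ev y (f k) := by
  classical
  induction s using Finset.induction_on with
  | empty => simp [ev_one]
  | insert a s hx ih => rw [Finset.prod_insert hx, Finset.prod_insert hx, ev_mul hy, ih]

lemma ev_sub (hy : ‖y‖ < 1) (F G : PowerSeries ℤ_[p]) : ev y (F - G) = ev y F - ev y G := by
  have h : F - G + G = F := by ring
  have h2 := ev_add hy (F - G) G
  rw [h] at h2
  linear_combination -h2
end Ev

section Fps
variable (p : ℕ) [Fact p.Prime]

noncomputable def Aps (k : ℕ) : PowerSeries ℤ_[p] :=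
  ∏ j ∈ Finset.range k,
    (PowerSeries.C (((2 * j + 1 : ℕ) : ℤ_[p]) ^ 4) - PowerSeries.X)

noncomputable def Bps (k : ℕ) : PowerSeries ℤ_[p] :=
  ∏ j ∈ Finset.range k,
    (PowerSeries.C (((2 * j + 2 : ℕ) : ℤ_[p]) ^ 4) - PowerSeries.X)

noncomputable def cz (hp : Odd p) (k : ℕ) : ℤ_[p] :=
  ⟨((4 * k + 1 : ℕ) : ℚ_[p]) * (-1) ^ k * poch ((1 : ℚ_[p]) / 2) k / (k.factorial : ℚ_[p]),
    cQ_norm_le k hp⟩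

noncomputable def Fps (hp : Odd p) : PowerSeries ℤ_[p] :=
  ∑ k ∈ Finset.range ((p - 1) / 2 + 1),
    PowerSeries.C (cz p hp k) * Aps p k * Ring.inverse (Bps p k)

variable {p}

lemma isUnit_nat_cast {n : ℕ} (h0 : 0 < n) (hn : n < p) : IsUnit ((n : ℤ_[p])) := by
  rw [PadicInt.isUnit_iff, PadicInt.norm_def]
  exact_mod_cast norm_nat_cast_eq_one h0 hn

lemma Bps_isUnit (hp : Odd p) {k : ℕ} (hk : k ≤ (p - 1) / 2) : IsUnit (Bps p k) := by
  rw [PowerSeries.isUnit_iff_constantCoeff]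
  rw [Bps, map_prod]
  refine Finset.prod_induction _ IsUnit (fun a b ha hb => ha.mul hb) isUnit_one fun j hj => ?_
  rw [map_sub, PowerSeries.constantCoeff_C, PowerSeries.constantCoeff_X, sub_zero]
  refine (isUnit_nat_cast (by omega) ?_).pow 4
  have hj' : j < k := Finset.mem_range.mp hj
  have hprime : p.Prime := Fact.out
  rcases hp with ⟨t, ht⟩
  have h2 := hprime.two_le
  omega

lemma qden_ne {y : ℚ_[p]} (hy : ‖y‖ < 1) {n : ℕ} (h0 : 0 < n) (hn : n < p) :
    ((n : ℚ_[p])) ^ 4 - y ≠ 0 := by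
  have h1 : ‖((n : ℚ_[p])) ^ 4‖ = 1 := by
    rw [norm_pow, norm_nat_cast_eq_one h0 hn, one_pow]
  intro h0'
  rw [sub_eq_zero] at h0'
  rw [← h0', h1] at hy
  exact lt_irrefl 1 hy

lemma ev_Fps (hp : Odd p) {y : ℚ_[p]} (hy : ‖y‖ < 1) :
    ev y (Fps p hp) = ∑ k ∈ Finset.range ((p - 1) / 2 + 1),
      ((4 * k + 1 : ℕ) : ℚ_[p]) * (-1) ^ k * poch ((1 : ℚ_[p]) / 2) k / (k.factorial : ℚ_[p]) *
        ((∏ j ∈ Finset.range k, (((2 * j + 1 : ℕ) : ℚ_[p]) ^ 4 - y)) /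
         (∏ j ∈ Finset.range k, (((2 * j + 2 : ℕ) : ℚ_[p]) ^ 4 - y))) := by
  rw [Fps, ev_sum hy]
  refine Finset.sum_congr rfl fun k hk => ?_
  have hk' : k ≤ (p - 1) / 2 := by
    have := Finset.mem_range.mp hk; omega
  have hprime : p.Prime := Fact.out
  have hBu := Bps_isUnit hp hk'
  have hevA : ev y (Aps p k) = ∏ j ∈ Finset.range k, (((2 * j + 1 : ℕ) : ℚ_[p]) ^ 4 - y) := by
    rw [Aps, ev_prod hy]
    refine Finset.prod_congr rfl fun j hj => ?_
    rw [ev_sub hy, ev_C, ev_X]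
    norm_cast
  have hevB : ev y (Bps p k) = ∏ j ∈ Finset.range k, (((2 * j + 2 : ℕ) : ℚ_[p]) ^ 4 - y) := by
    rw [Bps, ev_prod hy]
    refine Finset.prod_congr rfl fun j hj => ?_
    rw [ev_sub hy, ev_C, ev_X]
    norm_cast
  have hBne : (∏ j ∈ Finset.range k, (((2 * j + 2 : ℕ) : ℚ_[p]) ^ 4 - y)) ≠ 0 := by
    refine Finset.prod_ne_zero_iff.mpr fun j hj => ?_
    have hj' : j < k := Finset.mem_range.mp hj
    refine qden_ne hy (by omega) ?_
    rcases hp with ⟨t, ht⟩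
    have h2 := hprime.two_le
    omega
  have hinv : ev y (Ring.inverse (Bps p k)) =
      (∏ j ∈ Finset.range k, (((2 * j + 2 : ℕ) : ℚ_[p]) ^ 4 - y))⁻¹ := by
    have hmul := Ring.mul_inverse_cancel _ hBu
    have h2 : ev y (Bps p k) * ev y (Ring.inverse (Bps p k)) = 1 := by
      rw [← ev_mul hy, hmul, ev_one]
    rw [hevB] at h2
    exact (inv_eq_of_mul_eq_one_right h2).symm
  have hcz : ((cz p hp k : ℤ_[p]) : ℚ_[p])
      = ((4 * k + 1 : ℕ) : ℚ_[p]) * (-1) ^ k * poch ((1 : ℚ_[p]) / 2) k /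
        (k.factorial : ℚ_[p]) := rfl
  rw [ev_mul hy, ev_mul hy, ev_C, hevA, hinv, hcz, div_eq_mul_inv, div_eq_mul_inv]
  ring

end Fps

section Kside
variable {p : ℕ} [Fact p.Prime] {K : Type*} [NontriviallyNormedField K] [NormedAlgebra ℚ_[p] K]

lemma algebraMap_norm_le (r : ℚ_[p]) : ‖algebraMap ℚ_[p] K r‖ ≤ ‖r‖ := by
  rw [Algebra.algebraMap_eq_smul_one]
  calc ‖r • (1 : K)‖ ≤ ‖r‖ * ‖(1 : K)‖ := norm_smul_le r 1
    _ = ‖r‖ := by rw [norm_one, mul_one]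

lemma algebraMap_norm_eq_one {r : ℚ_[p]} (h : ‖r‖ = 1) : ‖algebraMap ℚ_[p] K r‖ = 1 := by
  have hr0 : r ≠ 0 := by
    intro h0; rw [h0] at h; simp at h
  have h1 : ‖algebraMap ℚ_[p] K r‖ * ‖algebraMap ℚ_[p] K r⁻¹‖ = 1 := by
    rw [← norm_mul, ← map_mul, mul_inv_cancel₀ hr0, map_one, norm_one]
  have h2 : ‖algebraMap ℚ_[p] K r‖ ≤ 1 := (algebraMap_norm_le r).trans_eq h
  have h3 : ‖algebraMap ℚ_[p] K r⁻¹‖ ≤ 1 := by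
    refine (algebraMap_norm_le r⁻¹).trans_eq ?_
    rw [norm_inv, h, inv_one]
  nlinarith [norm_nonneg (algebraMap ℚ_[p] K r), norm_nonneg (algebraMap ℚ_[p] K r⁻¹)]

lemma Kden_ne {x : ℚ_[p]} (hx : ‖x‖ < 1) {n : ℕ} (h0 : 0 < n) (hn : n < p) :
    ((n : K)) ^ 4 - (algebraMap ℚ_[p] K x) ^ 4 ≠ 0 := by
  have hX : ‖(algebraMap ℚ_[p] K x) ^ 4‖ < 1 := by
    rw [norm_pow]
    have h1 : ‖algebraMap ℚ_[p] K x‖ ≤ ‖x‖ := algebraMap_norm_le x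
    have h2 : ‖algebraMap ℚ_[p] K x‖ < 1 := lt_of_le_of_lt h1 hx
    exact pow_lt_one₀ (norm_nonneg _) h2 (by norm_num)
  have hnk : ‖((n : K)) ^ 4‖ = 1 := by
    rw [norm_pow, show ((n : K)) = algebraMap ℚ_[p] K ((n : ℚ_[p])) from (map_natCast _ n).symm,
      algebraMap_norm_eq_one (norm_nat_cast_eq_one h0 hn), one_pow]
  intro hc
  rw [sub_eq_zero] at hc
  rw [← hc, hnk] at hX
  exact lt_irrefl 1 hX

lemma map_poch (φ : ℚ_[p] →+* K) (a : ℚ_[p]) (k : ℕ) : φ (poch a k) = poch (φ a) k := by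
  unfold poch
  rw [map_prod]
  exact Finset.prod_congr rfl fun j _ => by rw [map_add, map_natCast]

end Kside


/-- For an odd prime `p`, the rational function `Ψ(x)` is a power series in `x^4`
with coefficients in `ℤ_p`: there are `a_n ∈ ℤ_p` with
`Ψ(x) = ∑_{n≥0} a_n x^{4n}` (the series converging for `‖x‖ < 1`).
Here `K` is any normed field extension of `ℚ_p` containing `i` with `i^2 = -1`. -/
theorem psi_powerSeries_x4 (p : ℕ) [Fact p.Prime] (hp : Odd p)
    (K : Type*) [NontriviallyNormedField K] [NormedAlgebra ℚ_[p] K]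
    (i : K) (hi : i ^ 2 = -1) :
    ∃ a : ℕ → ℤ_[p], ∀ x : ℚ_[p], ‖x‖ < 1 →
      HasSum (fun n : ℕ => algebraMap ℚ_[p] K (((a n : ℚ_[p])) * x ^ (4 * n)))
        (psiFun p i (algebraMap ℚ_[p] K x)) := by
  haveI : CharZero K := charZero_of_injective_algebraMap (algebraMap ℚ_[p] K).injective
  refine ⟨fun n => PowerSeries.coeff (R := ℤ_[p]) n (Fps p hp), fun x hx => ?_⟩
  have hy4 : ‖x ^ 4‖ < 1 := by
    rw [norm_pow]; exact pow_lt_one₀ (norm_nonneg _) hx (by norm_num)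
  have hprime : p.Prime := Fact.out
  obtain ⟨t, ht⟩ := id hp
  have h2p := hprime.two_le
  set φ := algebraMap ℚ_[p] K with hφ
  have h1 : HasSum (fun n => ((PowerSeries.coeff (R := ℤ_[p]) n (Fps p hp) : ℚ_[p]) * x ^ (4 * n)))
      (ev (x ^ 4) (Fps p hp)) := by
    have h := ev_hasSum hy4 (Fps p hp)
    convert h using 2 with n
    rw [pow_mul]
  have h2 := ev_Fps hp hy4
  have hdenK : ∀ k ∈ Finset.range ((p - 1) / 2 + 1),
      (∏ j ∈ Finset.range k, (((2 * j + 2 : ℕ) : K) ^ 4 - (φ x) ^ 4)) ≠ 0 := by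
    intro k hk
    have hk' := Finset.mem_range.mp hk
    refine Finset.prod_ne_zero_iff.mpr fun j hj => ?_
    have hj' := Finset.mem_range.mp hj
    exact Kden_ne hx (by omega) (by omega)
  have h5 := psi_eq p i (φ x) hi hdenK
  have h4 : φ (∑ k ∈ Finset.range ((p - 1) / 2 + 1),
      ((4 * k + 1 : ℕ) : ℚ_[p]) * (-1) ^ k * poch ((1 : ℚ_[p]) / 2) k / (k.factorial : ℚ_[p]) *
        ((∏ j ∈ Finset.range k, (((2 * j + 1 : ℕ) : ℚ_[p]) ^ 4 - x ^ 4)) /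
         (∏ j ∈ Finset.range k, (((2 * j + 2 : ℕ) : ℚ_[p]) ^ 4 - x ^ 4))))
      = ∑ k ∈ Finset.range ((p - 1) / 2 + 1),
      ((4 * k + 1 : ℕ) : K) * (-1) ^ k * poch ((1 : K) / 2) k / (k.factorial : K) *
        ((∏ j ∈ Finset.range k, (((2 * j + 1 : ℕ) : K) ^ 4 - (φ x) ^ 4)) /
         (∏ j ∈ Finset.range k, (((2 * j + 2 : ℕ) : K) ^ 4 - (φ x) ^ 4))) := by
    rw [map_sum]
    refine Finset.sum_congr rfl fun k hk => ?_
    simp only [map_mul, map_div₀, map_prod, map_sub, map_pow, map_natCast, map_neg, map_one,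
      map_poch φ, map_ofNat]
  have hfinal : φ (ev (x ^ 4) (Fps p hp)) = psiFun p i (φ x) := by
    rw [h2, h4, ← h5]
  have hmap := h1.map φ (continuous_algebraMap ℚ_[p] K)
  rw [hfinal] at hmap
  exact hmap
end

section
/- For an odd prime p, Γ(1 + p/2)Γ(1 - p/2) / (Γ(3/2)Γ(1/2)) = (p/2) · Γ_p(1 + p/2)Γ_p(1 - p/2) / (Γ_p(3/2)Γ_p(1/2)), where Γ is the classical Gamma function (the left side being a rational number) and Γ_p is the p-adic Gamma function. -/
set_option maxHeartbeats 1000000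

open Finset

/-- Morita's p-adic Gamma function on `ℤ_p`: the continuous extension of
`n ↦ (-1)^n ∏_{1 ≤ k < n, p ∤ k} k` (the limit is taken along the integer
approximations `x.appr n → x`). -/
noncomputable def moritaGamma (p : ℕ) [Fact p.Prime] (x : ℤ_[p]) : ℤ_[p] :=
  Filter.limUnder Filter.atTop (fun n : ℕ =>
    ((-1 : ℤ_[p]) ^ (x.appr n) *
      ∏ k ∈ (Finset.range (x.appr n)).filter (fun k => ¬ p ∣ k), (k : ℤ_[p])))
open Finset

section Wilson

variable (p : ℕ) [hfp : Fact p.Prime]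

/-- In `ZMod (p^k)` with `p` odd, squares roots of 1 are `±1`. -/
lemma sq_eq_one_cases (hp : Odd p) (k : ℕ) (x : ZMod (p ^ k)) (hx : x * x = 1) :
    x = 1 ∨ x = -1 := by
  have hP : (p : ℕ) ^ k ≠ 0 := pow_ne_zero _ hfp.out.pos.ne'
  haveI : NeZero (p ^ k) := ⟨hP⟩
  set a : ℤ := (x.val : ℤ) with ha
  have hxa : ((a : ZMod (p ^ k))) = x := by
    simp [ha, ZMod.natCast_val, ZMod.intCast_cast, ZMod.intCast_zmod_cast]
  have hdvd : ((p : ℤ) ^ k) ∣ (a - 1) * (a + 1) := by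
    have : ((a - 1) * (a + 1) : ZMod (p ^ k)) = 0 := by
      push_cast [hxa]
      linear_combination hx
    have := (ZMod.intCast_zmod_eq_zero_iff_dvd _ _).mp (by exact_mod_cast this)
    simpa using this
  have hpprime : Prime (p : ℤ) := Nat.prime_iff_prime_int.mp hfp.out
  have hnotboth : ¬ ((p : ℤ) ∣ (a - 1) ∧ (p : ℤ) ∣ (a + 1)) := by
    rintro ⟨h1, h2⟩
    have : (p : ℤ) ∣ 2 := by
      have := dvd_sub h2 h1; simpa using this
    have h2' : (p : ℕ) ∣ 2 := by exact_mod_cast this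
    have hp2 := (Nat.prime_dvd_prime_iff_eq hfp.out Nat.prime_two).mp h2'
    rw [hp2, Nat.odd_iff] at hp
    omega
  by_cases h1 : (p : ℤ) ∣ (a - 1)
  · -- then p ∤ a+1, so p^k coprime to a+1, so p^k ∣ a-1
    have h2 : ¬ (p : ℤ) ∣ (a + 1) := fun h => hnotboth ⟨h1, h⟩
    have hco : IsCoprime ((p : ℤ) ^ k) (a + 1) :=
      (IsCoprime.pow_left ((hpprime.coprime_iff_not_dvd).mpr h2))
    have : ((p : ℤ) ^ k) ∣ (a - 1) := hco.dvd_of_dvd_mul_right hdvd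
    left
    have : ((a - 1 : ℤ) : ZMod (p ^ k)) = 0 := by
      rw [ZMod.intCast_zmod_eq_zero_iff_dvd]; exact_mod_cast this
    push_cast at this
    rw [hxa] at this
    exact sub_eq_zero.mp this
  · have hco : IsCoprime ((p : ℤ) ^ k) (a - 1) :=
      (IsCoprime.pow_left ((hpprime.coprime_iff_not_dvd).mpr h1))
    have : ((p : ℤ) ^ k) ∣ (a + 1) := hco.dvd_of_dvd_mul_left hdvd
    right
    have : ((a + 1 : ℤ) : ZMod (p ^ k)) = 0 := by
      rw [ZMod.intCast_zmod_eq_zero_iff_dvd]; exact_mod_cast this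
    push_cast at this
    rw [hxa] at this
    exact eq_neg_of_add_eq_zero_left this
end Wilson
--MERGEPOINT
section W2
variable (p : ℕ) [hfp : Fact p.Prime]

lemma neg_one_ne_one_units (hp : Odd p) {k : ℕ} (hk : 0 < k) :
    (-1 : (ZMod (p ^ k))ˣ) ≠ 1 := by
  haveI : NeZero (p ^ k) := ⟨pow_ne_zero _ hfp.out.pos.ne'⟩
  intro h
  have h' : (-1 : ZMod (p ^ k)) = 1 := by
    have := congrArg (Units.val) h
    simpa using this
  have h2 : ((2 : ℕ) : ZMod (p ^ k)) = 0 := by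
    push_cast
    linear_combination -h'
  have := (ZMod.natCast_eq_zero_iff 2 (p ^ k)).mp h2
  have hle := Nat.le_of_dvd (by norm_num) this
  have h3 : 3 ≤ p := by
    rcases hp with ⟨m, hm⟩
    have := hfp.out.two_le
    omega
  have : 3 ≤ p ^ k := le_trans h3 (Nat.le_self_pow hk.ne' p)
  omega

lemma prod_units_eq_neg_one (hp : Odd p) (k : ℕ) :
    ∏ u : (ZMod (p ^ k))ˣ, (u : ZMod (p ^ k)) = -1 := by
  rcases Nat.eq_zero_or_pos k with rfl | hk
  · haveI : Subsingleton (ZMod (p ^ 0)) := by rw [pow_zero]; infer_instance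
    exact Subsingleton.elim _ _
  haveI : NeZero (p ^ k) := ⟨pow_ne_zero _ hfp.out.pos.ne'⟩
  -- work in the units group
  suffices h : ∏ u : (ZMod (p ^ k))ˣ, u = (-1 : (ZMod (p ^ k))ˣ) by
    have := congrArg (Units.coeHom (ZMod (p ^ k))) h
    rw [map_prod] at this
    simpa using this
  classical
  have hne : (-1 : (ZMod (p ^ k))ˣ) ≠ 1 := neg_one_ne_one_units p hp hk
  have hsplit : (univ : Finset (ZMod (p ^ k))ˣ) = (univ \ {1, -1}) ∪ {1, -1} := by
    rw [sdiff_union_self_eq_union]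
    exact (Finset.union_eq_left.mpr (Finset.subset_univ _)).symm
  rw [hsplit, Finset.prod_union (Finset.sdiff_disjoint), Finset.prod_pair hne.symm]
  have hmid : ∏ u ∈ (univ \ {1, -1} : Finset (ZMod (p ^ k))ˣ), u = 1 := by
    apply Finset.prod_involution (g := fun a _ => a⁻¹)
    · intro a _; exact mul_inv_cancel a
    · intro a ha hne1
      simp only [mem_sdiff, mem_insert, mem_singleton, not_or] at ha
      intro hinv
      have hsq : (a : ZMod (p ^ k)) * a = 1 := by
        have : a * a = 1 := by
          nth_rewrite 1 [← hinv]
          exact inv_mul_cancel a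
        have := congrArg (Units.coeHom (ZMod (p ^ k))) this
        simpa using this
      rcases sq_eq_one_cases p hp k a hsq with h1 | h1
      · exact ha.2.1 (Units.ext (by simpa using h1))
      · exact ha.2.2 (Units.ext (by simpa using h1))
    · intro a _; exact inv_inv a
    · intro a ha
      have ha' : a ≠ 1 ∧ a ≠ -1 := by simpa using ha
      show a⁻¹ ∈ univ \ {1, -1}
      rw [mem_sdiff]
      refine ⟨mem_univ _, ?_⟩
      simp only [mem_insert, mem_singleton, not_or]
      constructor
      · intro h; apply ha'.1; rw [← inv_inv a, h]; simp
      · intro h; apply ha'.2; rw [← inv_inv a, h]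
        rw [inv_eq_iff_mul_eq_one]; simp
  rw [hmid, one_mul, one_mul]
end W2
section GG
open Finset
variable (p : ℕ) [hfp : Fact p.Prime]

/-- Integer version of the Morita Gamma sequence. -/
def Gseq (n : ℕ) : ℤ := (-1) ^ n * ∏ k ∈ (range n).filter (fun k => ¬ p ∣ k), (k : ℤ)

lemma Gseq_eq_ite (n : ℕ) :
    Gseq p n = (-1) ^ n * ∏ x ∈ range n, (if ¬ p ∣ x then (x : ℤ) else 1) := by
  classical
  rw [Gseq, Finset.prod_filter]

lemma Gseq_succ_of_not_dvd {n : ℕ} (hn : ¬ p ∣ n) :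
    Gseq p (n + 1) = -(n : ℤ) * Gseq p n := by
  classical
  rw [Gseq_eq_ite, Gseq_eq_ite, Finset.prod_range_succ, if_pos hn]
  ring

lemma Gseq_succ_of_dvd {n : ℕ} (hn : p ∣ n) :
    Gseq p (n + 1) = - Gseq p n := by
  classical
  rw [Gseq_eq_ite, Gseq_eq_ite, Finset.prod_range_succ, if_neg (by simpa using hn)]
  ring

lemma not_dvd_iff_isUnit {k : ℕ} (hk : 0 < k) (x : ℕ) :
    (¬ p ∣ x) ↔ IsUnit ((x : ZMod (p ^ k))) := by
  rw [ZMod.isUnit_iff_coprime, Nat.coprime_pow_right_iff hk, Nat.coprime_comm,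
    Nat.Prime.coprime_iff_not_dvd hfp.out]

lemma prod_Ico_block (hp : Odd p) {k : ℕ} (hk : 0 < k) (n : ℕ) :
    ∏ x ∈ Ico n (n + p ^ k), (if ¬ p ∣ x then ((x : ZMod (p ^ k))) else 1) = -1 := by
  classical
  haveI : NeZero (p ^ k) := ⟨pow_ne_zero _ hfp.out.pos.ne'⟩
  have hP : 0 < p ^ k := pow_pos hfp.out.pos k
  have step1 : ∏ x ∈ Ico n (n + p ^ k), (if ¬ p ∣ x then ((x : ZMod (p ^ k))) else 1)
      = ∏ y : ZMod (p ^ k), (if IsUnit y then y else 1) := by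
    refine Finset.prod_nbij' (fun x => ((x : ZMod (p ^ k))))
      (fun y => n + (y - (n : ZMod (p ^ k))).val) ?_ ?_ ?_ ?_ ?_
    · intro x _; exact mem_univ _
    · intro y _
      show n + (y - (n : ZMod (p ^ k))).val ∈ Ico n (n + p ^ k)
      rw [mem_Ico]
      have := ZMod.val_lt (y - (n : ZMod (p ^ k)))
      omega
    · intro x hx
      rw [mem_Ico] at hx
      show n + (((x : ZMod (p ^ k))) - (n : ZMod (p ^ k))).val = x
      have h1 : ((x : ZMod (p ^ k))) - (n : ZMod (p ^ k)) = ((x - n : ℕ) : ZMod (p ^ k)) := by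
        push_cast [Nat.cast_sub hx.1]
        ring
      rw [h1, ZMod.val_cast_of_lt (by omega)]
      omega
    · intro y _
      show ((n + (y - (n : ZMod (p ^ k))).val : ℕ) : ZMod (p ^ k)) = y
      push_cast [ZMod.natCast_val, ZMod.cast_id]
      ring
    · intro x hx
      show (if ¬ p ∣ x then ((x : ZMod (p ^ k))) else 1)
          = (if IsUnit ((x : ZMod (p ^ k))) then ((x : ZMod (p ^ k))) else 1)
      exact if_congr (not_dvd_iff_isUnit p hk x) rfl rfl
  rw [step1, ← Finset.prod_filter]
  have step2 : ∏ y ∈ Finset.univ.filter (fun y : ZMod (p ^ k) => IsUnit y), y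
      = ∏ u : (ZMod (p ^ k))ˣ, (u : ZMod (p ^ k)) := by
    symm
    apply Finset.prod_bij (i := fun (u : (ZMod (p ^ k))ˣ) _ => (u : ZMod (p ^ k)))
    · intro u _
      simp [Finset.mem_filter, u.isUnit]
    · intro u _ v _ h
      exact Units.ext h
    · intro y hy
      rw [Finset.mem_filter] at hy
      obtain ⟨u, hu⟩ := hy.2
      exact ⟨u, mem_univ _, hu⟩
    · intro u _; rfl
  rw [step2, prod_units_eq_neg_one p hp k]

lemma Gseq_cast {k : ℕ} (M : ℕ) :
    ((Gseq p M : ℤ) : ZMod (p ^ k)) =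
      (-1) ^ M * ∏ x ∈ range M, (if ¬ p ∣ x then ((x : ZMod (p ^ k))) else 1) := by
  classical
  rw [Gseq_eq_ite, Int.cast_mul, Int.cast_pow, Int.cast_neg, Int.cast_one, Int.cast_prod]
  congr 1
  apply Finset.prod_congr rfl
  intro x _
  split <;> simp

lemma Gseq_add_pow (hp : Odd p) {k : ℕ} (hk : 0 < k) (n : ℕ) :
    ((Gseq p (n + p ^ k) : ℤ) : ZMod (p ^ k)) = ((Gseq p n : ℤ) : ZMod (p ^ k)) := by
  classical
  rw [Gseq_cast, Gseq_cast,
    ← Finset.prod_range_mul_prod_Ico _ (Nat.le_add_right n (p ^ k)),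
    prod_Ico_block p hp hk n]
  have hodd : Odd (p ^ k) := hp.pow
  rw [pow_add, hodd.neg_one_pow]
  ring

lemma Gseq_add_mul_pow (hp : Odd p) {k : ℕ} (hk : 0 < k) (n c : ℕ) :
    ((Gseq p (n + c * p ^ k) : ℤ) : ZMod (p ^ k)) = ((Gseq p n : ℤ) : ZMod (p ^ k)) := by
  induction c with
  | zero => simp
  | succ c ih =>
    have : n + (c + 1) * p ^ k = (n + c * p ^ k) + p ^ k := by ring
    rw [this, Gseq_add_pow p hp hk, ih]

lemma Gseq_mod_le (hp : Odd p) {k : ℕ} (hk : 0 < k) {a b : ℕ} (hab : b ≤ a)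
    (h : ((p : ℤ)) ^ k ∣ (a : ℤ) - (b : ℤ)) :
    ((Gseq p a : ℤ) : ZMod (p ^ k)) = ((Gseq p b : ℤ) : ZMod (p ^ k)) := by
  obtain ⟨c, hc⟩ : ∃ c : ℕ, a = b + c * p ^ k := by
    obtain ⟨d, hd⟩ := h
    have hp0 : (0 : ℤ) < (p : ℤ) := by exact_mod_cast hfp.out.pos
    have hppos : (0 : ℤ) < (p : ℤ) ^ k := by positivity
    have hab' : (b : ℤ) ≤ (a : ℤ) := by exact_mod_cast hab
    have hd0 : 0 ≤ d := by nlinarith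
    refine ⟨d.toNat, ?_⟩
    have : (a : ℤ) = (b : ℤ) + (d.toNat : ℤ) * (p : ℤ) ^ k := by
      rw [Int.toNat_of_nonneg hd0]; linarith
    exact_mod_cast this
  rw [hc]
  exact Gseq_add_mul_pow p hp hk b c

lemma Gseq_mod (hp : Odd p) (k : ℕ) {a b : ℕ}
    (h : ((p : ℤ)) ^ k ∣ (a : ℤ) - (b : ℤ)) :
    ((p : ℤ)) ^ k ∣ Gseq p a - Gseq p b := by
  rcases Nat.eq_zero_or_pos k with rfl | hk
  · simpa using Int.one_dvd _
  suffices hz : ((Gseq p a : ℤ) : ZMod (p ^ k)) = ((Gseq p b : ℤ) : ZMod (p ^ k)) by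
    have h0 : ((Gseq p a - Gseq p b : ℤ) : ZMod (p ^ k)) = 0 := by
      push_cast
      rw [hz]; ring
    have := (ZMod.intCast_zmod_eq_zero_iff_dvd _ _).mp h0
    exact_mod_cast this
  rcases le_total b a with hab | hab
  · exact Gseq_mod_le p hp hk hab h
  · exact (Gseq_mod_le p hp hk hab (by simpa using h.neg_right)).symm
end GG
section Padic
open Finset Filter
variable (p : ℕ) [hfp : Fact p.Prime]

noncomputable def Fp (n : ℕ) : ℤ_[p] := ((Gseq p n : ℤ) : ℤ_[p])

lemma Fp_def (n : ℕ) :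
    Fp p n = (-1) ^ n * ∏ k ∈ (range n).filter (fun k => ¬ p ∣ k), (k : ℤ_[p]) := by
  rw [Fp, Gseq]
  push_cast
  rfl

lemma Fp_norm_sub (hp : Odd p) (k : ℕ) {a b : ℕ}
    (h : ((p : ℤ)) ^ k ∣ (a : ℤ) - (b : ℤ)) :
    ‖Fp p a - Fp p b‖ ≤ (p : ℝ) ^ (-k : ℤ) := by
  have hd := Gseq_mod p hp k h
  rw [Fp, Fp, ← Int.cast_sub]
  exact PadicInt.norm_int_le_pow_iff_dvd.mpr (by exact_mod_cast hd)

lemma appr_sub_dvd (x : ℤ_[p]) {m n : ℕ} (h : n ≤ m) :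
    ((p : ℤ)) ^ n ∣ ((x.appr m : ℤ) - (x.appr n : ℤ)) := by
  have h1 := PadicInt.appr_spec n x
  have h2 := PadicInt.appr_spec m x
  have h2' : x - (x.appr m : ℤ_[p]) ∈ Ideal.span {(p : ℤ_[p]) ^ n} := by
    apply Ideal.span_singleton_le_span_singleton.mpr (pow_dvd_pow _ h)
    exact h2
  have h3 : ((x.appr m : ℤ_[p])) - ((x.appr n : ℤ_[p])) ∈ Ideal.span {(p : ℤ_[p]) ^ n} := by
    have := Ideal.sub_mem _ h1 h2'
    simpa using this
  rw [← PadicInt.norm_le_pow_iff_mem_span_pow] at h3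
  have h4 : ‖((((x.appr m : ℤ) - (x.appr n : ℤ)) : ℤ) : ℤ_[p])‖ ≤ (p : ℝ) ^ (-n : ℤ) := by
    push_cast
    exact h3
  have := PadicInt.norm_int_le_pow_iff_dvd.mp h4
  exact_mod_cast this

lemma pow_neg_tendsto : Tendsto (fun n : ℕ => (p : ℝ) ^ (-n : ℤ)) atTop (nhds 0) := by
  have hp1 : (1 : ℝ) < (p : ℝ) := by exact_mod_cast hfp.out.one_lt
  have heq : (fun n : ℕ => (p : ℝ) ^ (-n : ℤ)) = fun n : ℕ => ((p : ℝ)⁻¹) ^ n := by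
    funext n
    rw [zpow_neg, zpow_natCast, inv_pow]
  rw [heq]
  apply tendsto_pow_atTop_nhds_zero_of_lt_one (by positivity)
  rw [inv_lt_one_iff₀]
  right; exact hp1

lemma Fp_appr_cauchy (hp : Odd p) (x : ℤ_[p]) :
    CauchySeq (fun n => Fp p (x.appr n)) := by
  apply cauchySeq_of_le_tendsto_0 (fun n : ℕ => (p : ℝ) ^ (-n : ℤ)) _ (pow_neg_tendsto p)
  intro n m N hn hm
  rw [dist_eq_norm]
  apply Fp_norm_sub p hp
  have h1 := appr_sub_dvd p x hn
  have h2 := appr_sub_dvd p x hm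
  have := dvd_sub h1 h2
  simpa using this

lemma tendsto_moritaGamma (hp : Odd p) (x : ℤ_[p]) :
    Tendsto (fun n => Fp p (x.appr n)) atTop (nhds (moritaGamma p x)) := by
  obtain ⟨a, ha⟩ := cauchySeq_tendsto_of_complete (Fp_appr_cauchy p hp x)
  have hMG : moritaGamma p x = a := by
    rw [moritaGamma]
    have heq : (fun n : ℕ => ((-1 : ℤ_[p]) ^ (x.appr n) *
        ∏ k ∈ (Finset.range (x.appr n)).filter (fun k => ¬ p ∣ k), (k : ℤ_[p])))
        = fun n => Fp p (x.appr n) := by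
      funext n
      rw [Fp_def]
    rw [heq]
    exact ha.limUnder_eq
  rw [hMG]
  exact ha

lemma appr_tendsto (x : ℤ_[p]) :
    Tendsto (fun n => ((x.appr n : ℤ_[p]))) atTop (nhds x) := by
  rw [tendsto_iff_dist_tendsto_zero]
  apply squeeze_zero (fun n => dist_nonneg) (fun n => ?_) (pow_neg_tendsto p)
  rw [dist_comm, dist_eq_norm]
  rw [PadicInt.norm_le_pow_iff_mem_span_pow]
  exact PadicInt.appr_spec n x

lemma tendsto_moritaGamma' (hp : Odd p) (x : ℤ_[p]) (a : ℕ → ℕ)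
    (ha : Tendsto (fun n => ((a n : ℤ_[p]))) atTop (nhds x)) :
    Tendsto (fun n => Fp p (a n)) atTop (nhds (moritaGamma p x)) := by
  have key : Tendsto (fun n => Fp p (a n) - Fp p (x.appr n)) atTop (nhds 0) := by
    rw [NormedAddCommGroup.tendsto_nhds_zero]
    intro ε hε
    obtain ⟨k, hk⟩ : ∃ k : ℕ, (p : ℝ) ^ (-k : ℤ) < ε := by
      have := (pow_neg_tendsto p).eventually (eventually_lt_nhds hε)
      exact this.exists
    have h1 : ∀ᶠ n in atTop, ‖((a n : ℤ_[p])) - x‖ ≤ (p : ℝ) ^ (-k : ℤ) := by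
      have hlt : (0 : ℝ) < (p : ℝ) ^ (-k : ℤ) := by
        have : (0:ℝ) < p := by exact_mod_cast hfp.out.pos
        positivity
      have := (tendsto_iff_dist_tendsto_zero.mp ha).eventually
        (eventually_le_nhds hlt)
      filter_upwards [this] with n hn
      rwa [dist_eq_norm] at hn
    have h2 : ∀ᶠ n in atTop, ‖x - ((x.appr n : ℤ_[p]))‖ ≤ (p : ℝ) ^ (-k : ℤ) := by
      filter_upwards [eventually_ge_atTop k] with n hn
      have := (PadicInt.norm_le_pow_iff_mem_span_pow _ n).mpr (PadicInt.appr_spec n x)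
      refine le_trans this ?_
      apply zpow_le_zpow_right₀ (by exact_mod_cast hfp.out.one_le)
      omega
    filter_upwards [h1, h2] with n hn1 hn2
    have hd : ‖((a n : ℤ_[p])) - ((x.appr n : ℤ_[p]))‖ ≤ (p : ℝ) ^ (-k : ℤ) := by
      have : ((a n : ℤ_[p])) - ((x.appr n : ℤ_[p]))
          = (((a n : ℤ_[p])) - x) + (x - ((x.appr n : ℤ_[p]))) := by ring
      rw [this]
      exact le_trans (PadicInt.nonarchimedean _ _) (max_le hn1 hn2)
    have hdvd : ((p : ℤ)) ^ k ∣ ((a n : ℤ) - (x.appr n : ℤ)) := by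
      have : ‖(((a n : ℤ) - (x.appr n : ℤ) : ℤ) : ℤ_[p])‖ ≤ (p : ℝ) ^ (-k : ℤ) := by
        push_cast
        exact hd
      exact_mod_cast PadicInt.norm_int_le_pow_iff_dvd.mp this
    calc ‖Fp p (a n) - Fp p (x.appr n)‖ ≤ (p : ℝ) ^ (-k : ℤ) :=
          Fp_norm_sub p hp k hdvd
      _ < ε := hk
  have := key.add (tendsto_moritaGamma p hp x)
  simpa using this
end Padic
section FE
open Finset Filter
variable (p : ℕ) [hfp : Fact p.Prime]

lemma not_dvd_appr_of_norm_one (x : ℤ_[p]) (hx : ‖x‖ = 1) {n : ℕ} (hn : 1 ≤ n) :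
    ¬ p ∣ x.appr n := by
  intro hdvd
  have h1 : ‖((x.appr n : ℤ_[p]))‖ < 1 := by
    rw [show ((x.appr n : ℤ_[p])) = (((x.appr n : ℤ)) : ℤ_[p]) by push_cast; ring]
    rw [PadicInt.norm_int_lt_one_iff_dvd]
    exact_mod_cast hdvd
  have h2 : ‖x - ((x.appr n : ℤ_[p]))‖ < 1 := by
    have := (PadicInt.norm_le_pow_iff_mem_span_pow _ n).mpr (PadicInt.appr_spec n x)
    refine lt_of_le_of_lt this ?_
    have hp1 : (1 : ℝ) < (p : ℝ) := by exact_mod_cast hfp.out.one_lt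
    calc (p : ℝ) ^ (-n : ℤ) ≤ (p : ℝ) ^ (-1 : ℤ) := by
          apply zpow_le_zpow_right₀ (le_of_lt hp1); omega
      _ < 1 := by
          rw [zpow_neg_one]
          rw [inv_lt_one_iff₀]; right; exact hp1
  have : ‖x‖ < 1 := by
    have hxeq : x = (x - ((x.appr n : ℤ_[p]))) + ((x.appr n : ℤ_[p])) := by ring
    rw [hxeq]
    exact lt_of_le_of_lt (PadicInt.nonarchimedean _ _) (max_lt h2 h1)
  rw [hx] at this
  exact lt_irrefl _ this

lemma dvd_appr_of_norm_lt_one (x : ℤ_[p]) (hx : ‖x‖ < 1) (n : ℕ) :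
    p ∣ x.appr n := by
  rcases Nat.eq_zero_or_pos n with rfl | hn
  · have h0 : x.appr 0 = 0 := Nat.lt_one_iff.mp (by simpa using PadicInt.appr_lt x 0)
    simp [h0]
  have h2 : ‖((x.appr n : ℤ_[p]))‖ < 1 := by
    have hmem := (PadicInt.norm_le_pow_iff_mem_span_pow _ n).mpr (PadicInt.appr_spec n x)
    have h2' : ‖x - ((x.appr n : ℤ_[p]))‖ < 1 := by
      refine lt_of_le_of_lt hmem ?_
      have hp1 : (1 : ℝ) < (p : ℝ) := by exact_mod_cast hfp.out.one_lt
      calc (p : ℝ) ^ (-n : ℤ) ≤ (p : ℝ) ^ (-1 : ℤ) := by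
            apply zpow_le_zpow_right₀ (le_of_lt hp1); omega
        _ < 1 := by
            rw [zpow_neg_one, inv_lt_one_iff₀]; right; exact hp1
    have hxeq : ((x.appr n : ℤ_[p])) = x + (((x.appr n : ℤ_[p])) - x) := by ring
    rw [hxeq]
    refine lt_of_le_of_lt (PadicInt.nonarchimedean _ _) (max_lt hx ?_)
    rwa [norm_sub_rev]
  have := (PadicInt.norm_int_lt_one_iff_dvd ((x.appr n : ℤ))).mp (by
    push_cast at h2 ⊢
    exact h2)
  exact_mod_cast this

lemma moritaGamma_add_one_of_norm_one (hp : Odd p) (x : ℤ_[p]) (hx : ‖x‖ = 1) :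
    moritaGamma p (x + 1) = -x * moritaGamma p x := by
  have hxa : Tendsto (fun n => ((x.appr n + 1 : ℕ) : ℤ_[p])) atTop (nhds (x + 1)) := by
    push_cast
    exact (appr_tendsto p x).add tendsto_const_nhds
  have h1 : Tendsto (fun n => Fp p (x.appr n + 1)) atTop (nhds (moritaGamma p (x + 1))) :=
    tendsto_moritaGamma' p hp (x + 1) _ hxa
  have h2 : Tendsto (fun n => (-(x.appr n : ℤ_[p])) * Fp p (x.appr n)) atTop
      (nhds (-x * moritaGamma p x)) :=
    ((appr_tendsto p x).neg).mul (tendsto_moritaGamma p hp x)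
  have heq : (fun n => (-(x.appr n : ℤ_[p])) * Fp p (x.appr n))
      =ᶠ[atTop] (fun n => Fp p (x.appr n + 1)) := by
    filter_upwards [eventually_ge_atTop 1] with n hn
    have hnd := not_dvd_appr_of_norm_one p x hx hn
    rw [Fp, Fp, Gseq_succ_of_not_dvd p hnd]
    push_cast
    ring
  exact tendsto_nhds_unique h1 (h2.congr' heq)

lemma moritaGamma_add_one_of_dvd (hp : Odd p) (x : ℤ_[p]) (hx : ‖x‖ < 1) :
    moritaGamma p (x + 1) = - moritaGamma p x := by
  have hxa : Tendsto (fun n => ((x.appr n + 1 : ℕ) : ℤ_[p])) atTop (nhds (x + 1)) := by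
    push_cast
    exact (appr_tendsto p x).add tendsto_const_nhds
  have h1 : Tendsto (fun n => Fp p (x.appr n + 1)) atTop (nhds (moritaGamma p (x + 1))) :=
    tendsto_moritaGamma' p hp (x + 1) _ hxa
  have h2 : Tendsto (fun n => - Fp p (x.appr n)) atTop (nhds (- moritaGamma p x)) :=
    (tendsto_moritaGamma p hp x).neg
  have heq : (fun n => - Fp p (x.appr n)) =ᶠ[atTop] (fun n => Fp p (x.appr n + 1)) := by
    filter_upwards [eventually_ge_atTop 1] with n hn
    have hnd := dvd_appr_of_norm_lt_one p x hx n
    rw [Fp, Fp, Gseq_succ_of_dvd p hnd]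
    push_cast
    ring
  exact tendsto_nhds_unique h1 (h2.congr' heq)

lemma moritaGamma_norm_one (hp : Odd p) (x : ℤ_[p]) : ‖moritaGamma p x‖ = 1 := by
  have hFp : ∀ n, ‖Fp p n‖ = 1 := by
    intro n
    have hnd : ¬ ((p : ℤ)) ∣ Gseq p n := by
      intro hdvd
      rw [Gseq] at hdvd
      have hpr : Prime ((p : ℤ)) := Nat.prime_iff_prime_int.mp hfp.out
      rcases hpr.dvd_mul.mp hdvd with h | h
      · exact hpr.not_unit (isUnit_of_dvd_unit h ((isUnit_one.neg).pow n))
      · obtain ⟨k, hk, hkd⟩ := (Prime.dvd_finset_prod_iff hpr _).mp h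
        rw [mem_filter] at hk
        exact hk.2 (by exact_mod_cast hkd)
    rw [Fp]
    refine le_antisymm (PadicInt.norm_le_one _) ?_
    by_contra hlt
    push_neg at hlt
    exact hnd ((PadicInt.norm_int_lt_one_iff_dvd _).mp hlt)
  have h1 := (tendsto_moritaGamma p hp x).norm
  have h2 : Tendsto (fun n => ‖Fp p (x.appr n)‖) atTop (nhds 1) := by
    simp only [hFp]
    exact tendsto_const_nhds
  exact tendsto_nhds_unique h1 h2
end FE
section Iter
open Finset Filter
variable (p : ℕ) [hfp : Fact p.Prime]

lemma moritaGamma_add_nat (hp : Odd p) (x : ℤ_[p]) (m : ℕ)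
    (h : ∀ j < m, ‖x + (j : ℤ_[p])‖ = 1) :
    moritaGamma p (x + (m : ℤ_[p])) = (∏ j ∈ range m, -(x + (j : ℤ_[p]))) * moritaGamma p x := by
  induction m with
  | zero => simp
  | succ m ih =>
    have hx : x + ((m + 1 : ℕ) : ℤ_[p]) = (x + (m : ℤ_[p])) + 1 := by push_cast; ring
    rw [hx, moritaGamma_add_one_of_norm_one p hp (x + (m : ℤ_[p])) (h m (Nat.lt_succ_self m)),
      ih (fun j hj => h j (Nat.lt_succ_of_lt hj)), prod_range_succ]
    ring

lemma norm_one_of_two_mul (hp : Odd p) (a : ℤ_[p]) (c : ℤ) (h : 2 * a = ((c : ℤ) : ℤ_[p]))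
    (hc : ¬ ((p : ℤ)) ∣ c) : ‖a‖ = 1 := by
  have h2 : ‖(2 : ℤ_[p])‖ = 1 := by
    have hnd : ¬ ((p : ℤ)) ∣ 2 := by
      intro hd
      have : p ∣ 2 := by exact_mod_cast hd
      have := (Nat.prime_dvd_prime_iff_eq hfp.out Nat.prime_two).mp this
      rw [this, Nat.odd_iff] at hp; omega
    have := mt (PadicInt.norm_int_lt_one_iff_dvd 2).mp hnd
    push_neg at this
    have hle : ‖((2 : ℤ) : ℤ_[p])‖ ≤ 1 := PadicInt.norm_le_one _
    have : ‖((2 : ℤ) : ℤ_[p])‖ = 1 := le_antisymm hle this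
    simpa using this
  have hcn : ‖((c : ℤ) : ℤ_[p])‖ = 1 := by
    have := mt (PadicInt.norm_int_lt_one_iff_dvd c).mp hc
    push_neg at this
    exact le_antisymm (PadicInt.norm_le_one _) this
  have := congrArg (fun z : ℤ_[p] => ‖z‖) h
  simp only [norm_mul] at this
  rw [h2, one_mul] at this
  rw [this, hcn]
end Iter
section PadicMain
open Finset Filter
variable (p : ℕ) [hfp : Fact p.Prime]

lemma padic_side (hp : Odd p) (t : ℤ_[p]) (ht : 2 * t = 1) (m : ℕ) (hm : p = 2 * m + 1) :
    (((-1 : ℚ) ^ m * p : ℚ) : ℚ_[p]) = (p : ℚ_[p]) / 2 *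
      (((moritaGamma p (1 + (p : ℤ_[p]) * t) * moritaGamma p (1 - (p : ℤ_[p]) * t) : ℤ_[p]) : ℚ_[p]) /
        ((moritaGamma p (1 + t) * moritaGamma p t : ℤ_[p]) : ℚ_[p])) := by
  have h2 : (2 : ℤ_[p]) ≠ 0 := two_ne_zero
  have hcancel : ∀ a b : ℤ_[p], 2 * a = 2 * b → a = b := fun a b h => mul_left_cancel₀ h2 h
  have hpcast : ((p : ℤ_[p])) = 2 * (m : ℤ_[p]) + 1 := by
    have h := congrArg (fun n : ℕ => (n : ℤ_[p])) hm
    push_cast at h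
    exact h
  -- norms of t + j
  have htnorm : ‖t‖ = 1 := by
    apply norm_one_of_two_mul p hp t 1 (by push_cast; linear_combination ht)
    intro hd
    have := Int.le_of_dvd one_pos hd
    have hp2 : 2 ≤ (p : ℤ) := by exact_mod_cast hfp.out.two_le
    omega
  have htj : ∀ j, j < m → ‖t + (j : ℤ_[p])‖ = 1 := by
    intro j hj
    apply norm_one_of_two_mul p hp _ (2 * j + 1) (by push_cast; linear_combination ht)
    intro hd
    have hpos : (0 : ℤ) < 2 * (j : ℤ) + 1 := by positivity
    have hle := Int.le_of_dvd hpos hd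
    have : (p : ℤ) = 2 * (m : ℤ) + 1 := by exact_mod_cast hm
    omega
  have huj : ∀ j, j < m → ‖(1 - (p : ℤ_[p]) * t) + (j : ℤ_[p])‖ = 1 := by
    intro j hj
    apply norm_one_of_two_mul p hp _ (2 * j + 2 - p)
    · push_cast
      linear_combination (-(p : ℤ_[p])) * ht
    · intro hd
      have hd2 : (p : ℤ) ∣ 2 * (j : ℤ) + 2 := by
        have := dvd_add hd (dvd_refl (p : ℤ))
        simpa using this
      have hpos : (0 : ℤ) < 2 * (j : ℤ) + 2 := by positivity
      have hle := Int.le_of_dvd hpos hd2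
      have : (p : ℤ) = 2 * (m : ℤ) + 1 := by exact_mod_cast hm
      omega
  -- identification of arguments
  have hpt : (p : ℤ_[p]) * t = t + (m : ℤ_[p]) := by
    apply hcancel
    rw [hpcast]
    linear_combination (2 * (m : ℤ_[p])) * ht
  have hu : (1 - (p : ℤ_[p]) * t) + (m : ℤ_[p]) = t := by
    apply hcancel
    rw [mul_add, mul_sub, hpcast]
    linear_combination (-(2 * (m : ℤ_[p]) + 2)) * ht
  -- functional equations
  have hptnorm : ‖(p : ℤ_[p]) * t‖ < 1 := by
    rw [norm_mul, htnorm, mul_one, PadicInt.norm_p]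
    rw [inv_lt_one_iff₀]
    right
    exact_mod_cast hfp.out.one_lt
  have hA : moritaGamma p (1 + (p : ℤ_[p]) * t) = - moritaGamma p ((p : ℤ_[p]) * t) := by
    rw [show (1 : ℤ_[p]) + (p : ℤ_[p]) * t = (p : ℤ_[p]) * t + 1 by ring]
    exact moritaGamma_add_one_of_dvd p hp _ hptnorm
  have hApt : moritaGamma p ((p : ℤ_[p]) * t)
      = (∏ j ∈ range m, -(t + (j : ℤ_[p]))) * moritaGamma p t := by
    rw [hpt]
    exact moritaGamma_add_nat p hp t m htj
  have hD : moritaGamma p t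
      = (∏ j ∈ range m, -((1 - (p : ℤ_[p]) * t) + (j : ℤ_[p]))) *
          moritaGamma p (1 - (p : ℤ_[p]) * t) := by
    conv_lhs => rw [← hu]
    exact moritaGamma_add_nat p hp _ m huj
  have hrefl : ∏ j ∈ range m, -((1 - (p : ℤ_[p]) * t) + (j : ℤ_[p]))
      = ∏ j ∈ range m, (t + (j : ℤ_[p])) := by
    rw [← Finset.prod_range_reflect (fun j => t + (j : ℤ_[p])) m]
    apply Finset.prod_congr rfl
    intro j hj
    rw [mem_range] at hj
    apply hcancel
    have hcast : ((m - 1 - j : ℕ) : ℤ_[p]) = (m : ℤ_[p]) - 1 - (j : ℤ_[p]) := by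
      have h1 : (m - 1 - j : ℕ) + (j + 1) = m := by omega
      have := congrArg (fun n : ℕ => (n : ℤ_[p])) h1
      push_cast at this
      linear_combination this
    rw [hcast]
    linear_combination 2 * hpt
  have hC : moritaGamma p (1 + t) = -t * moritaGamma p t := by
    rw [show (1 : ℤ_[p]) + t = t + 1 by ring]
    exact moritaGamma_add_one_of_norm_one p hp t htnorm
  have hQ : ∏ j ∈ range m, -(t + (j : ℤ_[p]))
      = (-1) ^ m * ∏ j ∈ range m, (t + (j : ℤ_[p])) := by
    calc ∏ j ∈ range m, -(t + (j : ℤ_[p]))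
        = ∏ j ∈ range m, ((-1 : ℤ_[p]) * (t + (j : ℤ_[p]))) := by
          apply Finset.prod_congr rfl; intro j _; ring
      _ = (∏ _j ∈ range m, (-1 : ℤ_[p])) * ∏ j ∈ range m, (t + (j : ℤ_[p])) :=
          Finset.prod_mul_distrib
      _ = (-1) ^ m * ∏ j ∈ range m, (t + (j : ℤ_[p])) := by
          rw [Finset.prod_const, Finset.card_range]
  -- key products
  have hAB : moritaGamma p (1 + (p : ℤ_[p]) * t) * moritaGamma p (1 - (p : ℤ_[p]) * t)
      = -(-1) ^ m * (moritaGamma p t * moritaGamma p t) := by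
    have hRB : (∏ j ∈ range m, (t + (j : ℤ_[p]))) * moritaGamma p (1 - (p : ℤ_[p]) * t)
        = moritaGamma p t := by
      rw [← hrefl]
      exact hD.symm
    rw [hA, hApt, hQ]
    linear_combination (-(-1 : ℤ_[p]) ^ m * moritaGamma p t) * hRB
  have hCD : moritaGamma p (1 + t) * moritaGamma p t
      = -(t * (moritaGamma p t * moritaGamma p t)) := by
    rw [hC]; ring
  -- nonvanishing
  have hDne : (moritaGamma p t : ℚ_[p]) ≠ 0 := by
    rw [PadicInt.coe_ne_zero]
    intro h0
    have hn := moritaGamma_norm_one p hp t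
    rw [h0] at hn
    simp at hn
  have hτ : (t : ℚ_[p]) = 2⁻¹ := by
    have : ((2 : ℤ_[p]) : ℚ_[p]) * (t : ℚ_[p]) = 1 := by
      rw [← PadicInt.coe_mul, ht]; simp
    have h2' : ((2 : ℤ_[p]) : ℚ_[p]) = 2 := by
      rw [show (2 : ℤ_[p]) = (1 + 1 : ℤ_[p]) by norm_num, PadicInt.coe_add, PadicInt.coe_one]
      norm_num
    rw [h2'] at this
    field_simp
    linear_combination this
  -- final computation in ℚ_[p]
  rw [PadicInt.coe_mul, PadicInt.coe_mul]
  have hABq := congrArg (fun z : ℤ_[p] => (z : ℚ_[p])) hAB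
  have hCDq := congrArg (fun z : ℤ_[p] => (z : ℚ_[p])) hCD
  push_cast at hABq hCDq
  rw [hABq, hCDq]
  have h2q : (2 : ℚ_[p]) ≠ 0 := two_ne_zero
  push_cast
  rw [hτ]
  field_simp
end PadicMain
section ComplexSide
open Finset

lemma Gamma_add_nat_aux (z : ℂ) (m : ℕ) (h : ∀ j < m, z + (j : ℂ) ≠ 0) :
    Complex.Gamma (z + (m : ℂ)) = (∏ j ∈ range m, (z + (j : ℂ))) * Complex.Gamma z := by
  induction m with
  | zero => simp
  | succ m ih =>
    have hc : z + ((m + 1 : ℕ) : ℂ) = (z + (m : ℂ)) + 1 := by push_cast; ring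
    rw [hc, Complex.Gamma_add_one _ (h m (Nat.lt_succ_self m)),
      ih (fun j hj => h j (Nat.lt_succ_of_lt hj)), prod_range_succ]
    ring

lemma prod_32_aux (m : ℕ) :
    ∏ j ∈ range m, ((3 / 2 : ℂ) + (j : ℂ))
      = (2 * (m : ℂ) + 1) * ∏ j ∈ range m, ((1 / 2 : ℂ) + (j : ℂ)) := by
  induction m with
  | zero => simp
  | succ m ih =>
    rw [prod_range_succ, prod_range_succ, ih]
    push_cast
    ring

lemma prod_reflect_aux (m : ℕ) :
    ∏ j ∈ range m, ((1 / 2 : ℂ) - (m : ℂ) + (j : ℂ))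
      = (-1) ^ m * ∏ j ∈ range m, ((1 / 2 : ℂ) + (j : ℂ)) := by
  calc ∏ j ∈ range m, ((1 / 2 : ℂ) - (m : ℂ) + (j : ℂ))
      = ∏ j ∈ range m, (-((1 / 2 : ℂ) + ((m - 1 - j : ℕ) : ℂ))) := by
        apply prod_congr rfl
        intro j hj
        rw [mem_range] at hj
        have hc : ((m - 1 - j : ℕ) : ℂ) = (m : ℂ) - 1 - (j : ℂ) := by
          have h1 : (m - 1 - j : ℕ) + (j + 1) = m := by omega
          have := congrArg (fun n : ℕ => (n : ℂ)) h1
          push_cast at this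
          linear_combination this
        rw [hc]
        ring
    _ = ∏ j ∈ range m, (-((1 / 2 : ℂ) + (j : ℂ))) :=
        prod_range_reflect (fun j => -((1 / 2 : ℂ) + (j : ℂ))) m
    _ = (∏ _j ∈ range m, (-1 : ℂ)) * ∏ j ∈ range m, ((1 / 2 : ℂ) + (j : ℂ)) := by
        rw [← Finset.prod_mul_distrib]
        apply prod_congr rfl
        intro j _
        ring
    _ = (-1) ^ m * ∏ j ∈ range m, ((1 / 2 : ℂ) + (j : ℂ)) := by
        rw [Finset.prod_const, Finset.card_range]

lemma complex_side (p m : ℕ) (hm : p = 2 * m + 1) :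
    (((-1 : ℚ) ^ m * p : ℚ) : ℂ) = Complex.Gamma (1 + (p : ℂ) / 2) * Complex.Gamma (1 - (p : ℂ) / 2) /
      (Complex.Gamma (3 / 2) * Complex.Gamma (1 / 2)) := by
  have hhalf : ∀ j : ℕ, (1 / 2 : ℂ) + (j : ℂ) ≠ 0 := by
    intro j h
    have h2 : ((1 + 2 * j : ℕ) : ℂ) = 0 := by push_cast; linear_combination 2 * h
    rw [Nat.cast_eq_zero] at h2
    omega
  have h32 : ∀ j, j < m → (3 / 2 : ℂ) + (j : ℂ) ≠ 0 := by
    intro j _ h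
    have h2 : ((3 + 2 * j : ℕ) : ℂ) = 0 := by push_cast; linear_combination 2 * h
    rw [Nat.cast_eq_zero] at h2
    omega
  have h12m : ∀ j, j < m → (1 / 2 : ℂ) - (m : ℂ) + (j : ℂ) ≠ 0 := by
    intro j _ h
    have h2 : ((1 + 2 * j : ℕ) : ℂ) = ((2 * m : ℕ) : ℂ) := by
      push_cast
      linear_combination 2 * h
    have : 1 + 2 * j = 2 * m := by exact_mod_cast h2
    omega
  have hG32 : Complex.Gamma (3 / 2 : ℂ) ≠ 0 := by
    apply Complex.Gamma_ne_zero
    intro n h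
    have h2 : ((3 + 2 * n : ℕ) : ℂ) = 0 := by push_cast; linear_combination 2 * h
    rw [Nat.cast_eq_zero] at h2
    omega
  have hG12m : Complex.Gamma ((1 / 2 : ℂ) - (m : ℂ)) ≠ 0 := by
    apply Complex.Gamma_ne_zero
    intro n h
    have h2 : ((1 + 2 * n : ℕ) : ℂ) = ((2 * m : ℕ) : ℂ) := by
      push_cast
      linear_combination 2 * h
    have : 1 + 2 * n = 2 * m := by exact_mod_cast h2
    omega
  have harg1 : (1 + (p : ℂ) / 2) = (3 / 2 : ℂ) + (m : ℂ) := by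
    rw [hm]; push_cast; ring
  have harg2 : (1 - (p : ℂ) / 2) = (1 / 2 : ℂ) - (m : ℂ) := by
    rw [hm]; push_cast; ring
  have hG1 : Complex.Gamma ((3 / 2 : ℂ) + (m : ℂ))
      = (∏ j ∈ range m, ((3 / 2 : ℂ) + (j : ℂ))) * Complex.Gamma (3 / 2 : ℂ) :=
    Gamma_add_nat_aux _ _ h32
  have hG2 : Complex.Gamma (1 / 2 : ℂ)
      = (∏ j ∈ range m, ((1 / 2 : ℂ) - (m : ℂ) + (j : ℂ))) *
          Complex.Gamma ((1 / 2 : ℂ) - (m : ℂ)) := by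
    have := Gamma_add_nat_aux ((1 / 2 : ℂ) - (m : ℂ)) m h12m
    rw [show ((1 / 2 : ℂ) - (m : ℂ)) + (m : ℂ) = (1 / 2 : ℂ) by ring] at this
    exact this
  have hP0 : ∏ j ∈ range m, ((1 / 2 : ℂ) + (j : ℂ)) ≠ 0 :=
    Finset.prod_ne_zero_iff.mpr (fun j _ => hhalf j)
  rw [harg1, harg2, hG1, hG2, prod_32_aux, prod_reflect_aux]
  have hsq : ((-1 : ℂ)) ^ m * (-1) ^ m = 1 := by
    rw [← pow_add, ← two_mul, pow_mul]
    norm_num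
  have hne : Complex.Gamma (3 / 2 : ℂ) *
      ((-1 : ℂ) ^ m * (∏ j ∈ range m, ((1 / 2 : ℂ) + (j : ℂ))) *
        Complex.Gamma ((1 / 2 : ℂ) - (m : ℂ))) ≠ 0 := by
    apply mul_ne_zero hG32
    apply mul_ne_zero (mul_ne_zero (pow_ne_zero _ (by norm_num)) hP0) hG12m
  rw [eq_div_iff hne]
  rw [hm]
  push_cast
  linear_combination ((2 * (m : ℂ) + 1) * Complex.Gamma (3 / 2 : ℂ) *
    Complex.Gamma ((1 / 2 : ℂ) - (m : ℂ)) * (∏ j ∈ range m, ((1 / 2 : ℂ) + (j : ℂ)))) * hsq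
end ComplexSide

/-- For an odd prime `p`, the (rational) number
`Γ(1 + p/2)Γ(1 - p/2)/(Γ(3/2)Γ(1/2))` equals
`(p/2) · Γ_p(1 + p/2)Γ_p(1 - p/2)/(Γ_p(3/2)Γ_p(1/2))`:
there is a single rational `q` realizing both sides (the first in `ℂ`, the
second in `ℚ_p`).  Here `t ∈ ℤ_p` is the element `1/2`, so `3/2 = 1 + t`. -/
theorem gamma_vs_padicGamma (p : ℕ) [Fact p.Prime] (hp : Odd p)
    (t : ℤ_[p]) (ht : 2 * t = 1) :
    ∃ q : ℚ,
      (q : ℂ) = Complex.Gamma (1 + p / 2) * Complex.Gamma (1 - p / 2) /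
          (Complex.Gamma (3 / 2) * Complex.Gamma (1 / 2)) ∧
      (q : ℚ_[p]) = (p : ℚ_[p]) / 2 *
          (((moritaGamma p (1 + (p : ℤ_[p]) * t) * moritaGamma p (1 - (p : ℤ_[p]) * t) : ℤ_[p]) : ℚ_[p]) /
            ((moritaGamma p (1 + t) * moritaGamma p t : ℤ_[p]) : ℚ_[p])) := by
  obtain ⟨m, hm0⟩ := hp
  have hm : p = 2 * m + 1 := by omega
  have hp' : Odd p := ⟨m, by omega⟩
  exact ⟨(-1 : ℚ) ^ m * p, complex_side p m hm, padic_side p hp' t ht m hm⟩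
end
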